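/- Let R be a halidon ring with index m with primitive m-th root of unity ω, and let d be a positive divisor of m such that d is invertible in R. Then ω^{m/d} is a primitive d-th root of unity of R in the halidon sense (d is the least positive integer with (ω^{m/d})^d = 1, and Σ_{r=0}^{d-1} (ω^{m/d})^{rk} equals d if d ∣ k and 0 otherwise); hence R is also a halidon ring with index d. -/
import Mathlib


open scoped BigOperators

/-- `ω` is a primitive `m`-th root of unity in the halidon sense: `m` is the least
positive integer with `ω ^ m = 1`, and for every integer `k`,
`∑_{r=0}^{m-1} ω ^ (r k) = m` if `m ∣ k` and `= 0` otherwise. (Since `ω ^ m = 1`, it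
suffices to quantify over natural number exponents `k`.) -/
def IsHalidonPrimitiveRoot {R : Type*} [CommRing R] (m : ℕ) (ω : R) : Prop :=
  0 < m ∧ ω ^ m = 1 ∧ (∀ k : ℕ, 0 < k → ω ^ k = 1 → m ≤ k) ∧
    ∀ k : ℕ, (∑ r ∈ Finset.range m, ω ^ (r * k)) = if m ∣ k then (m : R) else 0

lemma sum_range_mul_aux {R : Type*} [CommRing R] (d : ℕ) (f : ℕ → R) :
    ∀ e : ℕ, ∑ r ∈ Finset.range (e * d), f r
      = ∑ q ∈ Finset.range e, ∑ s ∈ Finset.range d, f (q * d + s) := by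
  intro e
  induction e with
  | zero => simp
  | succ e ih =>
    rw [Nat.succ_mul, Finset.sum_range_add, ih, Finset.sum_range_succ]

/-- Let `R` be a halidon ring with index `m` and primitive `m`-th
root of unity `ω`, and let `d` be a positive divisor of `m` such that `d` is invertible
in `R`. Then `ω^(m/d)` is a primitive `d`-th root of unity of `R` in the halidon sense;
hence `R` is also a halidon ring with index `d`. -/
theorem halidon_ring_of_divisor_index {R : Type*} [CommRing R] (m : ℕ) (ω : R)
    (hω : IsHalidonPrimitiveRoot m ω) (hm : IsUnit (m : R))
    (d : ℕ) (hd0 : 0 < d) (hdm : d ∣ m) (hd : IsUnit (d : R)) :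
    IsHalidonPrimitiveRoot d (ω ^ (m / d)) ∧
    ∃ ω' : R, IsHalidonPrimitiveRoot d ω' ∧ IsUnit (d : R) := by
  obtain ⟨hm0, hωm, hmin, hsum⟩ := hω
  obtain ⟨e, hme⟩ := hdm
  have hed : m / d = e := by rw [hme]; exact Nat.mul_div_cancel_left e hd0
  have he0 : 0 < e := by
    rcases Nat.eq_zero_or_pos e with h | h
    · subst h; simp at hme; omega
    · exact h
  -- e is a unit in R
  have heu : IsUnit (e : R) := by
    have : IsUnit ((d : R) * (e : R)) := by
      rw [← Nat.cast_mul, ← hme]; exact hm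
    exact isUnit_of_mul_isUnit_right this
  rw [hed]
  have key : IsHalidonPrimitiveRoot d (ω ^ e) := by
    refine ⟨hd0, ?_, ?_, ?_⟩
    · rw [← pow_mul, mul_comm, ← hme, hωm]
    · intro k hk hpow
      rw [← pow_mul] at hpow
      have := hmin (e * k) (by positivity) hpow
      rw [hme, mul_comm d e] at this
      exact le_of_mul_le_mul_left this he0
    · intro k
      have h1 : (∑ r ∈ Finset.range m, ω ^ (r * (e * k)))
          = if m ∣ e * k then (m : R) else 0 := hsum (e * k)
      have h2 : ∑ r ∈ Finset.range m, ω ^ (r * (e * k))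
          = (e : R) * ∑ s ∈ Finset.range d, (ω ^ e) ^ (s * k) := by
        have hm' : m = e * d := by rw [hme, mul_comm]
        rw [hm', sum_range_mul_aux]
        calc ∑ q ∈ Finset.range e, ∑ s ∈ Finset.range d, ω ^ ((q * d + s) * (e * k))
            = ∑ q ∈ Finset.range e, ∑ s ∈ Finset.range d, (ω ^ e) ^ (s * k) := by
              refine Finset.sum_congr rfl fun q _ => Finset.sum_congr rfl fun s _ => ?_
              have : ω ^ ((q * d + s) * (e * k))
                  = (ω ^ m) ^ (q * k) * (ω ^ e) ^ (s * k) := by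
                rw [← pow_mul, ← pow_mul, ← pow_add, hm']
                ring_nf
              rw [this, hωm, one_pow, one_mul]
          _ = (e : R) * ∑ s ∈ Finset.range d, (ω ^ e) ^ (s * k) := by
              rw [Finset.sum_const, Finset.card_range, nsmul_eq_mul]
      have hdvd : m ∣ e * k ↔ d ∣ k := by
        rw [hme, mul_comm d e]
        exact Nat.mul_dvd_mul_iff_left he0
      rw [h2] at h1
      have h3 : (e : R) * ∑ s ∈ Finset.range d, (ω ^ e) ^ (s * k)
          = (e : R) * (if d ∣ k then (d : R) else 0) := by
        rw [h1]
        by_cases h : d ∣ k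
        · rw [if_pos (hdvd.mpr h), if_pos h, hme, Nat.cast_mul]; ring
        · rw [if_neg (fun hh => h (hdvd.mp hh)), if_neg h, mul_zero]
      have := heu.mul_left_cancel h3
      simpa [pow_mul] using this
  exact ⟨key, ⟨ω ^ e, key, hd⟩⟩
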